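/- Let E ⊆ ℝ^n (n ≥ 1) be an F_σ set with |E| = t, 0 < t < ∞. Then for each j ∈ {1,...,n} there exist nested F_σ sets E = E_0 ⊇ E_1 ⊇ ⋯ ⊇ E_n with |E_j| = 2^{−j}·t, such that for every j = 1,...,n and every F_σ set A ⊆ E_{j−1} with |A| ≥ 2^{−j}·t, the (n−1)-dimensional Lebesgue measure of the orthogonal projection of E_j onto the hyperplane {x_j = 0} is at most that of the projection of A. -/

import Mathlib

open MeasureTheory

/-- A set is F_σ if it is a countable union of closed sets. -/
def IsFsigma {X : Type*} [TopologicalSpace X] (s : Set X) : Prop :=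
  ∃ g : ℕ → Set X, (∀ i, IsClosed (g i)) ∧ s = ⋃ i, g i

/-- The orthogonal projection of ℝ^n onto the coordinate hyperplane x_j = 0,
identified with ℝ^{n-1}. -/
def projHyp {n : ℕ} (j : Fin n) (x : Fin n → ℝ) : {i : Fin n // i ≠ j} → ℝ :=
  fun i => x i.1

open Set Filter
open scoped ENNReal NNReal Topology

section Aux

lemma IsFsigma.measurableSet {X : Type*} [TopologicalSpace X] [MeasurableSpace X]
    [OpensMeasurableSpace X] {s : Set X} (h : IsFsigma s) : MeasurableSet s := by
  obtain ⟨g, hg, rfl⟩ := h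
  exact MeasurableSet.iUnion fun i => (hg i).measurableSet

lemma continuous_projHyp {n : ℕ} (j : Fin n) : Continuous (projHyp j) :=
  continuous_pi fun i => continuous_apply _

lemma measurableSet_proj {n : ℕ} (j : Fin n) {A : Set (Fin n → ℝ)} (hA : IsFsigma A) :
    MeasurableSet (projHyp j '' A) := by
  obtain ⟨g, hg, rfl⟩ := hA
  rw [Set.image_iUnion]
  refine MeasurableSet.iUnion fun i => ?_
  have : g i = ⋃ m : ℕ, g i ∩ Metric.closedBall 0 m := by
    apply Set.Subset.antisymm
    · intro x hx
      obtain ⟨m, hm⟩ := exists_nat_ge ‖x‖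
      exact Set.mem_iUnion.2 ⟨m, hx, by simpa [Metric.mem_closedBall, dist_zero_right] using hm⟩
    · exact Set.iUnion_subset fun m => Set.inter_subset_left
  rw [this, Set.image_iUnion]
  refine MeasurableSet.iUnion fun m => ?_
  exact (((isCompact_closedBall (0:Fin n → ℝ) m).inter_left (hg i)).image
    (continuous_projHyp j)).isClosed.measurableSet

lemma exists_fsigma_subset {n : ℕ} {B : Set (Fin n → ℝ)} (hB : MeasurableSet B)
    (hfin : volume B ≠ ⊤) : ∃ G, G ⊆ B ∧ IsFsigma G ∧ volume G = volume B := by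
  have h : ∀ k : ℕ, ∃ K, K ⊆ B ∧ IsCompact K ∧ volume (B \ K) < (↑(k+1))⁻¹ := by
    intro k
    exact hB.exists_isCompact_diff_lt hfin (by simp)
  choose K hKsub hKcomp hKlt using h
  refine ⟨⋃ k, K k, Set.iUnion_subset hKsub, ⟨K, fun k => (hKcomp k).isClosed, rfl⟩, ?_⟩
  have hdiff : volume (B \ ⋃ k, K k) = 0 := by
    by_contra h0
    obtain ⟨m, hm⟩ := ENNReal.exists_inv_nat_lt h0
    have h1 : volume (B \ ⋃ k, K k) ≤ volume (B \ K m) :=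
      measure_mono (Set.diff_subset_diff_right (Set.subset_iUnion K m))
    have h2 : ((m+1 : ℕ):ℝ≥0∞)⁻¹ ≤ ((m:ℕ):ℝ≥0∞)⁻¹ := by
      gcongr; exact_mod_cast le_self_add
    exact absurd hm (not_lt.2 (le_of_lt ((h1.trans_lt (hKlt m)).trans_le h2)))
  refine le_antisymm (measure_mono (Set.iUnion_subset hKsub)) ?_
  calc volume B ≤ volume (⋃ k, K k) + volume (B \ ⋃ k, K k) := by
        refine (measure_mono ?_).trans (measure_union_le _ _)
        intro x hx; by_cases hxK : x ∈ ⋃ k, K k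
        · exact Or.inl hxK
        · exact Or.inr ⟨hx, hxK⟩
    _ = volume (⋃ k, K k) := by rw [hdiff, add_zero]


lemma exists_Iic_measure_eq (μ : Measure ℝ) [IsFiniteMeasure μ] [NullSingletonClass μ]
    {r : ℝ≥0∞} (hr0 : 0 < r) (hrU : r < μ univ) : ∃ c : ℝ, μ (Iic c) = r := by
  have hne : {c : ℝ | r ≤ μ (Iic c)}.Nonempty := by
    have := tendsto_measure_Iic_atTop μ
    have hev : ∀ᶠ c in atTop, r < μ (Iic c) := this.eventually (eventually_gt_nhds hrU)
    obtain ⟨c, hc⟩ := hev.exists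
    exact ⟨c, hc.le⟩
  have hbdd : BddBelow {c : ℝ | r ≤ μ (Iic c)} := by
    have h0 : Tendsto (fun c : ℝ => μ (Iic c)) atBot (𝓝 (μ (⋂ c : ℝ, Iic c))) :=
      tendsto_measure_iInter_atBot (fun c => (measurableSet_Iic).nullMeasurableSet)
        (fun a b hab => Iic_subset_Iic.2 hab) ⟨0, measure_ne_top μ _⟩
    have hIic : (⋂ c : ℝ, Iic c) = (∅ : Set ℝ) := by
      apply eq_empty_iff_forall_notMem.2
      intro x hx
      have := mem_iInter.1 hx (x - 1)
      simp at this; linarith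
    rw [hIic, measure_empty] at h0
    have hev : ∀ᶠ c in atBot, μ (Iic c) < r := h0.eventually (eventually_lt_nhds hr0)
    obtain ⟨c, hc⟩ := hev.exists
    refine ⟨c, fun b hb => ?_⟩
    by_contra hcb
    push_neg at hcb
    exact absurd (hb.trans (measure_mono (Iic_subset_Iic.2 hcb.le))) (not_le.2 hc)
  set c₀ := sInf {c : ℝ | r ≤ μ (Iic c)} with hc₀
  refine ⟨c₀, le_antisymm ?_ ?_⟩
  · -- μ (Iic c₀) ≤ r  via Iio and no atoms
    have h1 : μ (Iic c₀) = μ (Iio c₀) := by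
      refine le_antisymm ?_ (measure_mono Iio_subset_Iic_self)
      calc μ (Iic c₀) ≤ μ (Iio c₀ ∪ {c₀}) := measure_mono (by
            intro x hx
            rcases lt_or_eq_of_le (mem_Iic.1 hx) with h | h
            · exact Or.inl h
            · exact Or.inr (by simp [h]))
        _ ≤ μ (Iio c₀) + μ {c₀} := measure_union_le _ _
        _ = μ (Iio c₀) := by rw [measure_singleton, add_zero]
    rw [h1]
    have hun : (⋃ k : ℕ, Iic (c₀ - 1/(k+1))) = Iio c₀ := by
      apply Subset.antisymm
      · refine iUnion_subset fun k => ?_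
        intro x hx
        have : (0:ℝ) < 1/(k+1) := by positivity
        have := mem_Iic.1 hx
        exact mem_Iio.2 (by linarith)
      · intro x hx
        obtain ⟨k, hk⟩ := exists_nat_one_div_lt (sub_pos.2 (mem_Iio.1 hx))
        exact mem_iUnion.2 ⟨k, mem_Iic.2 (by push_cast at hk ⊢; linarith)⟩
    rw [← hun]
    have hmono : Monotone fun k : ℕ => Iic (c₀ - 1/(k+1)) := by
      intro a b hab
      refine Iic_subset_Iic.2 (by
        have : (1:ℝ)/(b+1) ≤ 1/(a+1) := by
          apply one_div_le_one_div_of_le (by positivity) (by exact_mod_cast by omega)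
        linarith)
    have htd := tendsto_measure_iUnion_atTop (μ := μ) hmono
    refine le_of_tendsto htd (Eventually.of_forall fun k => ?_)
    have hnotmem : (c₀ - 1/(k+1)) ∉ {c : ℝ | r ≤ μ (Iic c)} := by
      intro hmem
      have h2 := csInf_le hbdd hmem
      have : (0:ℝ) < 1/(k+1) := by positivity
      rw [← hc₀] at h2; linarith
    exact (not_le.1 hnotmem).le
  · -- r ≤ μ (Iic c₀)
    have hint : (⋂ k : ℕ, Iic (c₀ + 1/(k+1))) = Iic c₀ := by
      apply Subset.antisymm
      · intro x hx
        refine mem_Iic.2 (le_of_forall_pos_le_add fun ε hε => ?_)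
        obtain ⟨k, hk⟩ := exists_nat_one_div_lt hε
        have := mem_Iic.1 (mem_iInter.1 hx k)
        linarith [le_of_lt hk]
      · intro x hx
        refine mem_iInter.2 fun k => mem_Iic.2 ?_
        have : (0:ℝ) < 1/(k+1) := by positivity
        have := mem_Iic.1 hx; linarith
    rw [← hint]
    have hanti : Antitone fun k : ℕ => Iic (c₀ + 1/(k+1)) := by
      intro a b hab
      refine Iic_subset_Iic.2 (by
        have : (1:ℝ)/(b+1) ≤ 1/(a+1) := by
          apply one_div_le_one_div_of_le (by positivity) (by exact_mod_cast by omega)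
        linarith)
    have htd := tendsto_measure_iInter_atTop (μ := μ)
      (fun k => measurableSet_Iic.nullMeasurableSet) hanti ⟨0, measure_ne_top μ _⟩
    refine ge_of_tendsto htd (Eventually.of_forall fun k => ?_)
    have : ∃ c ∈ {c : ℝ | r ≤ μ (Iic c)}, c < c₀ + 1/(k+1) := by
      apply exists_lt_of_csInf_lt hne
      rw [← hc₀]
      have : (0:ℝ) < 1/(k+1) := by positivity
      linarith
    obtain ⟨c, hc, hclt⟩ := this
    exact le_trans hc (measure_mono (Iic_subset_Iic.2 hclt.le))

lemma exists_subset_volume_eq {ι : Type*} [Fintype ι] [Nonempty ι] {S : Set (ι → ℝ)}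
    (hS : MeasurableSet S) (hfin : volume S ≠ ⊤) {r : ℝ≥0∞} (hr : r ≤ volume S) :
    ∃ W, W ⊆ S ∧ MeasurableSet W ∧ volume W = r := by
  rcases eq_or_lt_of_le hr with hr' | hr'
  · exact ⟨S, Subset.rfl, hS, hr'.symm⟩
  rcases eq_or_lt_of_le (zero_le : 0 ≤ r) with hr0 | hr0
  · exact ⟨∅, empty_subset _, MeasurableSet.empty, by simp [← hr0]⟩
  set i₀ : ι := Classical.arbitrary ι
  set μ : Measure ℝ := Measure.map (fun x => x i₀) (volume.restrict S) with hμ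
  have hμuniv : μ univ = volume S := by
    rw [hμ, Measure.map_apply (measurable_pi_apply i₀) MeasurableSet.univ]
    simp [Measure.restrict_apply MeasurableSet.univ]
  haveI : IsFiniteMeasure μ := ⟨by rw [hμuniv]; exact hfin.lt_top⟩
  haveI : NullSingletonClass μ := by
    constructor
    intro c
    rw [hμ, Measure.map_apply (measurable_pi_apply i₀) (measurableSet_singleton c),
      Measure.restrict_apply ((measurable_pi_apply i₀) (measurableSet_singleton c))]
    refine le_antisymm ?_ zero_le
    refine le_trans (measure_mono inter_subset_left) ?_
    have : ((fun x : ι → ℝ => x i₀) ⁻¹' {c}) = {f : ι → ℝ | f i₀ = c} := rfl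
    rw [this, volume_pi, Measure.pi_hyperplane]
  obtain ⟨c, hc⟩ := exists_Iic_measure_eq μ hr0 (by rwa [hμuniv])
  refine ⟨S ∩ {x | x i₀ ≤ c}, inter_subset_left, hS.inter ((measurable_pi_apply i₀) measurableSet_Iic), ?_⟩
  rw [hμ, Measure.map_apply (measurable_pi_apply i₀) measurableSet_Iic,
    Measure.restrict_apply ((measurable_pi_apply i₀) measurableSet_Iic)] at hc
  rw [← hc]
  congr 1
  ext x; simp [Set.mem_Iic, and_comm]


lemma stepLemma (n : ℕ) (j : Fin n) (F : Set (Fin n → ℝ)) (hF : IsFsigma F)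
    (u s : ℝ) (hs : 0 < s) (hsu : s < u) (hFu : volume F = ENNReal.ofReal u) :
    ∃ G, G ⊆ F ∧ IsFsigma G ∧ volume G = ENNReal.ofReal s ∧
      ∀ A, IsFsigma A → A ⊆ F → ENNReal.ofReal s ≤ volume A →
        volume (projHyp j '' G) ≤ volume (projHyp j '' A) := by
  classical
  have hFfin : volume F ≠ ⊤ := by rw [hFu]; exact ENNReal.ofReal_ne_top
  rcases isEmpty_or_nonempty {i : Fin n // i ≠ j} with hemp | hne
  · -- degenerate case: the hyperplane is a point
    haveI : Nonempty (Fin n) := ⟨j⟩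
    obtain ⟨W, hWF, hWm, hWv⟩ := exists_subset_volume_eq (hF.measurableSet) hFfin
      (r := ENNReal.ofReal s) (by rw [hFu]; exact ENNReal.ofReal_le_ofReal hsu.le)
    obtain ⟨G, hGW, hGf, hGv⟩ :=
      exists_fsigma_subset hWm (by rw [hWv]; exact ENNReal.ofReal_ne_top)
    refine ⟨G, hGW.trans hWF, hGf, by rw [hGv, hWv], ?_⟩
    intro A hAf hAF hAvol
    haveI : Subsingleton ({i : Fin n // i ≠ j} → ℝ) :=
      ⟨fun f g => funext fun i => (hemp.false i).elim⟩
    have hAne : A.Nonempty := by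
      rcases A.eq_empty_or_nonempty with h | h
      · rw [h, measure_empty] at hAvol
        have h0 : ENNReal.ofReal s = 0 := le_antisymm hAvol zero_le
        rw [ENNReal.ofReal_eq_zero] at h0
        linarith
      · exact h
    obtain ⟨a, ha⟩ := hAne
    refine measure_mono ?_
    rintro y ⟨x, hx, rfl⟩
    exact ⟨a, ha, Subsingleton.elim _ _⟩
  · -- main case
    set p : Fin n → Prop := fun i => i ≠ j with hp
    haveI hne' : Nonempty {i : Fin n // p i} := hne
    set e := MeasurableEquiv.piEquivPiSubtypeProd (fun _ : Fin n => ℝ) p with he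
    have hmp : MeasurePreserving e := volume_preserving_piEquivPiSubtypeProd _ p
    have heproj : ∀ x : Fin n → ℝ, (e x).1 = projHyp j x := fun x => rfl
    set F' := e '' F with hF'def
    have hF'm : MeasurableSet F' := e.measurableSet_image.2 hF.measurableSet
    set φ : ({i : Fin n // p i} → ℝ) → ℝ≥0∞ := fun y => volume (Prod.mk y ⁻¹' F') with hφdef
    have hφm : Measurable φ := measurable_measure_prodMk_left hF'm
    have fubini : ∀ D : Set (({i : Fin n // p i} → ℝ) × ({i : Fin n // ¬ p i} → ℝ)),
        MeasurableSet D → volume D = ∫⁻ y, volume (Prod.mk y ⁻¹' D) := by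
      intro D hD
      rw [MeasureTheory.Measure.volume_eq_prod, Measure.prod_apply hD]
    have hvolF' : volume F' = ENNReal.ofReal u := by
      rw [hF'def, e.image_eq_preimage_symm, (hmp.symm e).measure_preimage
        hF.measurableSet.nullMeasurableSet, hFu]
    set ν := (volume : Measure ({i : Fin n // p i} → ℝ)).withDensity φ with hνdef
    have hν : ∀ T, MeasurableSet T → ν T = ∫⁻ y in T, φ y := fun T hT => withDensity_apply φ hT
    have hνuniv : ν univ = ENNReal.ofReal u := by
      rw [hν univ MeasurableSet.univ, setLIntegral_univ, ← hvolF', fubini F' hF'm]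
    haveI : IsFiniteMeasure ν := ⟨by rw [hνuniv]; exact ENNReal.ofReal_lt_top⟩
    set ψ : ℝ≥0∞ → ℝ≥0∞ := fun l => ν {y | l < φ y} with hψdef
    have hm1 : ∀ l, MeasurableSet {y | l < φ y} := fun l => measurableSet_lt measurable_const hφm
    have hm2 : ∀ l, MeasurableSet {y | φ y = l} := fun l => hφm (measurableSet_singleton l)
    -- existence of a finite l with ψ l ≤ ofReal s
    have hS0 : ∃ l : ℝ≥0∞, l ≠ ⊤ ∧ ψ l ≤ ENNReal.ofReal s := by
      have hanti : Antitone fun k : ℕ => {y | (k : ℝ≥0∞) < φ y} := by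
        intro a b hab y hy
        exact lt_of_le_of_lt (by exact_mod_cast hab : (a:ℝ≥0∞) ≤ b) hy
      have hiInter : (⋂ k : ℕ, {y | (k : ℝ≥0∞) < φ y}) = {y | φ y = ⊤} := by
        ext y
        simp only [mem_iInter, mem_setOf_eq]
        constructor
        · intro h
          by_contra htop
          obtain ⟨k, hk⟩ := ENNReal.exists_nat_gt htop
          exact absurd (h k) (not_lt.2 hk.le)
        · intro h k; rw [h]; exact ENNReal.natCast_lt_top k
      have hnull : volume {y | φ y = ⊤} = 0 := by
        have hint : ∫⁻ y, φ y ≠ ⊤ := by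
          rw [← fubini F' hF'm, hvolF']; exact ENNReal.ofReal_ne_top
        have hae := ae_lt_top hφm hint
        rw [ae_iff] at hae
        refine measure_mono_null ?_ hae
        intro y hy
        simp only [mem_setOf_eq, not_lt]
        exact le_of_eq hy.symm
      have hνnull : ν {y | φ y = ⊤} = 0 := by
        rw [hν _ (hm2 ⊤)]
        exact setLIntegral_measure_zero _ _ hnull
      have hiInf : (⨅ k : ℕ, ψ (k : ℝ≥0∞)) = 0 := by
        calc (⨅ k : ℕ, ν {y | (k:ℝ≥0∞) < φ y})
            = ν (⋂ k : ℕ, {y | (k:ℝ≥0∞) < φ y}) :=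
              (hanti.measure_iInter (fun k => (hm1 _).nullMeasurableSet)
                ⟨0, measure_ne_top ν _⟩).symm
          _ = 0 := by rw [hiInter, hνnull]
      have hlt : (⨅ k : ℕ, ψ (k:ℝ≥0∞)) < ENNReal.ofReal s := by
        rw [hiInf]; exact ENNReal.ofReal_pos.2 hs
      obtain ⟨k, hk⟩ := iInf_lt_iff.1 hlt
      exact ⟨k, ENNReal.natCast_ne_top k, hk.le⟩
    obtain ⟨l₀, hl₀top, hl₀⟩ := hS0
    set lam := sInf {l : ℝ≥0∞ | ψ l ≤ ENNReal.ofReal s} with hlamdef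
    have hlam_le : lam ≤ l₀ := sInf_le hl₀
    have hlamtop : lam ≠ ⊤ := (hlam_le.trans_lt hl₀top.lt_top).ne
    have hlam_not : ∀ l, l < lam → ENNReal.ofReal s < ψ l := by
      intro l hl
      by_contra hcon
      push_neg at hcon
      exact absurd (sInf_le (show l ∈ {l : ℝ≥0∞ | ψ l ≤ ENNReal.ofReal s} from hcon))
        (not_le.2 hl)
    have hψlam : ψ lam ≤ ENNReal.ofReal s := by
      have hun : {y | lam < φ y} = ⋃ k : ℕ, {y | lam + (k:ℝ≥0∞)⁻¹ ≤ φ y} := by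
        ext y
        simp only [mem_setOf_eq, mem_iUnion]
        constructor
        · intro h
          have hδ : φ y - lam ≠ 0 := fun hc => absurd (tsub_eq_zero_iff_le.1 hc) (not_le.2 h)
          obtain ⟨k, hk⟩ := ENNReal.exists_inv_nat_lt hδ
          refine ⟨k, ?_⟩
          have h2 : lam + (k:ℝ≥0∞)⁻¹ < lam + (φ y - lam) := ENNReal.add_lt_add_left hlamtop hk
          rw [add_tsub_cancel_of_le h.le] at h2
          exact h2.le
        · rintro ⟨k, hk⟩
          exact (ENNReal.lt_add_right hlamtop (by simp)).trans_le hk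
      have hmono : Monotone fun k : ℕ => {y | lam + (k:ℝ≥0∞)⁻¹ ≤ φ y} := by
        intro a b hab y hy
        refine le_trans (add_le_add_right (ENNReal.inv_le_inv.2 ?_) lam) hy
        exact_mod_cast hab
      have : ν {y | lam < φ y} ≤ ENNReal.ofReal s := by
        rw [hun, Monotone.measure_iUnion hmono]
        refine iSup_le fun k => ?_
        have hlt : lam < lam + (k:ℝ≥0∞)⁻¹ := ENNReal.lt_add_right hlamtop (by simp)
        have hlt' : sInf {l : ℝ≥0∞ | ψ l ≤ ENNReal.ofReal s} < lam + (k:ℝ≥0∞)⁻¹ := by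
          rw [← hlamdef]; exact hlt
        obtain ⟨l, hl, hllt⟩ := sInf_lt_iff.1 hlt'
        refine le_trans (measure_mono ?_) hl
        intro y hy
        exact hllt.trans_le hy
      exact this
    have hlam0 : lam ≠ 0 := by
      intro h0
      have hψ0 : ψ 0 ≤ ENNReal.ofReal s := by rw [← h0]; exact hψlam
      have huniv : (univ : Set ({i : Fin n // p i} → ℝ)) = {y | (0:ℝ≥0∞) < φ y} ∪ {y | φ y = 0} := by
        ext y
        simp only [mem_univ, true_iff, mem_union, mem_setOf_eq, pos_iff_ne_zero]
        exact (em _).symm.imp id id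
      have hdisj0 : Disjoint {y | (0:ℝ≥0∞) < φ y} {y | φ y = 0} := by
        rw [Set.disjoint_left]
        intro y hy1 hy2
        exact absurd hy2 (ne_of_gt hy1)
      have hν0 : ν {y | φ y = 0} = 0 := by
        rw [hν _ (hm2 0)]
        calc ∫⁻ y in {y | φ y = 0}, φ y = ∫⁻ _ in {y | φ y = 0}, 0 :=
              setLIntegral_congr_fun (hm2 0) (fun y hy => hy)
          _ = 0 := by simp
      have : ENNReal.ofReal u ≤ ENNReal.ofReal s := by
        rw [← hνuniv, huniv, measure_union hdisj0 (hm2 0), hν0, add_zero]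
        exact hψ0
      have hlt : ENNReal.ofReal s < ENNReal.ofReal u :=
        (ENNReal.ofReal_lt_ofReal_iff (hs.trans hsu)).2 hsu
      exact absurd this (not_le.2 hlt)
    have hge : ENNReal.ofReal s ≤ ν {y | lam ≤ φ y} := by
      have hmono : Monotone fun k : ℕ => lam - lam / ((k:ℝ≥0∞)+1) := by
        intro a b hab
        apply tsub_le_tsub_left
        have hcast : ((a:ℝ≥0∞)+1) ≤ ((b:ℝ≥0∞)+1) := by gcongr
        exact ENNReal.div_le_div_left hcast lam
      have hklt : ∀ k : ℕ, lam - lam / ((k:ℝ≥0∞)+1) < lam := by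
        intro k
        exact ENNReal.sub_lt_self hlamtop hlam0 (ENNReal.div_pos hlam0 (by simp)).ne'
      have hanti2 : Antitone fun k : ℕ => {y | lam - lam/((k:ℝ≥0∞)+1) < φ y} := by
        intro a b hab y hy
        exact lt_of_le_of_lt (hmono hab) hy
      have hiInter2 : (⋂ k : ℕ, {y | lam - lam/((k:ℝ≥0∞)+1) < φ y}) = {y | lam ≤ φ y} := by
        ext y
        simp only [mem_iInter, mem_setOf_eq]
        constructor
        · intro h
          by_contra hcon
          push_neg at hcon
          have hδ : lam - φ y ≠ 0 := fun hc => absurd (tsub_eq_zero_iff_le.1 hc) (not_le.2 hcon)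
          have hδtop : lam - φ y ≠ ⊤ := ((tsub_le_self).trans_lt hlamtop.lt_top).ne
          obtain ⟨k, hk⟩ := ENNReal.exists_nat_gt (ENNReal.div_lt_top hlamtop hδ).ne
          have h1 : lam < (k:ℝ≥0∞) * (lam - φ y) :=
            (ENNReal.div_lt_iff (Or.inl hδ) (Or.inl hδtop)).1 hk
          have hdiv : lam / ((k:ℝ≥0∞)+1) < lam - φ y := by
            rw [ENNReal.div_lt_iff (Or.inl (by simp)) (Or.inl (by simp))]
            calc lam < (k:ℝ≥0∞) * (lam - φ y) := h1
              _ ≤ (lam - φ y) * ((k:ℝ≥0∞)+1) := by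
                  rw [mul_comm]
                  exact mul_le_mul_right le_self_add _
          have hle : φ y ≤ lam - lam/((k:ℝ≥0∞)+1) := by
            have h3 : lam - (lam - φ y) ≤ lam - lam/((k:ℝ≥0∞)+1) := tsub_le_tsub_left hdiv.le lam
            rwa [ENNReal.sub_sub_cancel hlamtop hcon.le] at h3
          exact absurd (h k) (not_lt.2 hle)
        · intro h k
          exact lt_of_lt_of_le (hklt k) h
      rw [← hiInter2, hanti2.measure_iInter (fun k => (hm1 _).nullMeasurableSet)
        ⟨0, measure_ne_top ν _⟩]
      exact le_iInf fun k => (hlam_not _ (hklt k)).le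
    set big := {y | lam < φ y} with hbigdef
    set mid := {y | φ y = lam} with hmiddef
    have hbigm : MeasurableSet big := hm1 lam
    have hmidm : MeasurableSet mid := hm2 lam
    have hdisj : Disjoint big mid := by
      rw [Set.disjoint_left]
      intro y hy1 hy2
      exact absurd hy2 (ne_of_gt hy1)
    have hsplitset : {y | lam ≤ φ y} = big ∪ mid := by
      ext y
      simp only [hbigdef, hmiddef, mem_setOf_eq, mem_union]
      constructor
      · intro h
        rcases lt_or_eq_of_le h with h' | h'
        · exact Or.inl h'
        · exact Or.inr h'.symm
      · rintro (h | h)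
        exacts [h.le, h.ge]
    have hmid_eq : ν mid = lam * volume mid := by
      rw [hν mid hmidm]
      calc ∫⁻ y in mid, φ y = ∫⁻ _ in mid, lam :=
            setLIntegral_congr_fun hmidm (fun y hy => hy)
        _ = lam * volume mid := setLIntegral_const mid lam
    have hmidfin : volume mid ≠ ⊤ := by
      intro hcon
      have : ν mid = ⊤ := by rw [hmid_eq, hcon, ENNReal.mul_top hlam0]
      exact absurd this (measure_ne_top ν mid)
    have hbig_le : ν big ≤ ENNReal.ofReal s := hψlam
    have hsum : ENNReal.ofReal s ≤ ν big + ν mid := by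
      rw [← measure_union hdisj hmidm, ← hsplitset]
      exact hge
    set rtar := (ENNReal.ofReal s - ν big) / lam with hrtardef
    have hrle : rtar ≤ volume mid := by
      have h1 : ENNReal.ofReal s - ν big ≤ ν mid :=
        tsub_le_iff_right.2 (by rw [add_comm]; exact hsum)
      calc rtar ≤ ν mid / lam := ENNReal.div_le_div_right h1 lam
        _ = volume mid := ((ENNReal.eq_div_iff hlam0 hlamtop).2 hmid_eq.symm).symm
    obtain ⟨W, hWmid, hWm, hWv⟩ := exists_subset_volume_eq hmidm hmidfin hrle
    have hνW : ν W = ENNReal.ofReal s - ν big := by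
      rw [hν W hWm]
      calc ∫⁻ y in W, φ y = ∫⁻ _ in W, lam :=
            setLIntegral_congr_fun hWm (fun y hy => hWmid hy)
        _ = lam * volume W := setLIntegral_const W lam
        _ = lam * rtar := by rw [hWv]
        _ = ENNReal.ofReal s - ν big := ENNReal.mul_div_cancel hlam0 hlamtop
    set Y' := big ∪ W with hY'def
    have hY'm : MeasurableSet Y' := hbigm.union hWm
    have hνY' : ν Y' = ENNReal.ofReal s := by
      rw [hY'def, measure_union (hdisj.mono_right hWmid) hWm, hνW,
        add_tsub_cancel_of_le hbig_le]
    have hY'sub : ∀ y ∈ Y', lam ≤ φ y := by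
      rintro y (hy | hy)
      exacts [le_of_lt hy, (hWmid hy).ge]
    have hY'compl : ∀ y, y ∉ Y' → φ y ≤ lam := by
      intro y hy
      by_contra hcon
      push_neg at hcon
      exact hy (Or.inl hcon)
    set D := F' ∩ (Y' ×ˢ (univ : Set ({i : Fin n // ¬ p i} → ℝ))) with hDdef
    have hDm : MeasurableSet D := hF'm.inter (hY'm.prod MeasurableSet.univ)
    set B := e ⁻¹' D with hBdef
    have hBm : MeasurableSet B := e.measurable hDm
    have hBF : B ⊆ F := by
      intro x hx
      have h1 : e x ∈ F' := hx.1
      rw [hF'def] at h1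
      obtain ⟨x', hx', hex⟩ := h1
      rwa [← e.injective hex]
    have hfibD : ∀ y, volume (Prod.mk y ⁻¹' D) = Y'.indicator φ y := by
      intro y
      by_cases hy : y ∈ Y'
      · rw [indicator_of_mem hy]
        congr 1
        ext z
        simp [hDdef, hy]
      · rw [indicator_of_notMem hy]
        have hempty : Prod.mk y ⁻¹' D = ∅ := by
          ext z
          simp [hDdef, hy]
        rw [hempty, measure_empty]
    have hvolB : volume B = ENNReal.ofReal s := by
      rw [hBdef, hmp.measure_preimage hDm.nullMeasurableSet, fubini D hDm]
      calc ∫⁻ y, volume (Prod.mk y ⁻¹' D) = ∫⁻ y, Y'.indicator φ y := by simp_rw [hfibD]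
        _ = ∫⁻ y in Y', φ y := lintegral_indicator hY'm φ
        _ = ν Y' := (hν Y' hY'm).symm
        _ = ENNReal.ofReal s := hνY'
    obtain ⟨G, hGB, hGf, hGv⟩ :=
      exists_fsigma_subset hBm (by rw [hvolB]; exact ENNReal.ofReal_ne_top)
    refine ⟨G, hGB.trans hBF, hGf, by rw [hGv, hvolB], ?_⟩
    intro A hAf hAF hAvol
    set SA := projHyp j '' A with hSAdef
    have hSAm : MeasurableSet SA := measurableSet_proj j hAf
    have hprojG : projHyp j '' G ⊆ Y' := by
      rintro y ⟨x, hx, rfl⟩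
      have hxB : e x ∈ D := hGB hx
      have h2 : (e x).1 ∈ Y' := hxB.2.1
      rwa [heproj x] at h2
    have hνSA : ENNReal.ofReal s ≤ ν SA := by
      have hA'm : MeasurableSet (e '' A) := e.measurableSet_image.2 hAf.measurableSet
      have hvolA : volume A = ∫⁻ y, volume (Prod.mk y ⁻¹' (e '' A)) := by
        have h1 : volume (e '' A) = volume A := by
          rw [e.image_eq_preimage_symm, (hmp.symm e).measure_preimage
            hAf.measurableSet.nullMeasurableSet]
        rw [← h1, fubini _ hA'm]
      have hfib : ∀ y, volume (Prod.mk y ⁻¹' (e '' A)) ≤ SA.indicator φ y := by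
        intro y
        by_cases hy : y ∈ SA
        · rw [indicator_of_mem hy]
          exact measure_mono (preimage_mono (image_mono hAF))
        · rw [indicator_of_notMem hy]
          have hempty : Prod.mk y ⁻¹' (e '' A) = ∅ := by
            ext z
            simp only [mem_preimage, mem_empty_iff_false, iff_false]
            rintro ⟨x, hxA, hxe⟩
            refine hy ⟨x, hxA, ?_⟩
            rw [← heproj x, hxe]
          simp [hempty]
      calc ENNReal.ofReal s ≤ volume A := hAvol
        _ = ∫⁻ y, volume (Prod.mk y ⁻¹' (e '' A)) := hvolA
        _ ≤ ∫⁻ y, SA.indicator φ y := lintegral_mono hfib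
        _ = ∫⁻ y in SA, φ y := lintegral_indicator hSAm φ
        _ = ν SA := (hν SA hSAm).symm
    have hstep1 : ν (Y' \ SA) ≤ ν (SA \ Y') := by
      have e1 : ν (SA ∩ Y') + ν (SA \ Y') = ν SA := measure_inter_add_diff SA hY'm
      have e2 : ν (Y' ∩ SA) + ν (Y' \ SA) = ν Y' := measure_inter_add_diff Y' hSAm
      rw [inter_comm] at e2
      have hle : ν Y' ≤ ν SA := by rw [hνY']; exact hνSA
      rw [← e1, ← e2] at hle
      exact (ENNReal.add_le_add_iff_left (measure_ne_top ν _)).1 hle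
    have hstep2 : lam * volume (Y' \ SA) ≤ ν (Y' \ SA) := by
      rw [hν _ (hY'm.diff hSAm), ← setLIntegral_const]
      exact setLIntegral_mono' (hY'm.diff hSAm) fun y hy => hY'sub y hy.1
    have hstep3 : ν (SA \ Y') ≤ lam * volume (SA \ Y') := by
      rw [hν _ (hSAm.diff hY'm), ← setLIntegral_const]
      exact setLIntegral_mono' (hSAm.diff hY'm) fun y hy => hY'compl y hy.2
    have hstep4 : volume (Y' \ SA) ≤ volume (SA \ Y') :=
      (ENNReal.mul_le_mul_iff_right hlam0 hlamtop).1 (hstep2.trans (hstep1.trans hstep3))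
    calc volume (projHyp j '' G) ≤ volume Y' := measure_mono hprojG
      _ = volume (Y' ∩ SA) + volume (Y' \ SA) := (measure_inter_add_diff Y' hSAm).symm
      _ ≤ volume (SA ∩ Y') + volume (SA \ Y') := by
          rw [inter_comm]
          exact add_le_add_right hstep4 _
      _ = volume SA := measure_inter_add_diff SA hY'm


end Aux

/-- Projection lemma: for an F_σ set E ⊆ ℝ^n with |E| = t ∈ (0,∞) there are nested F_σ
sets E = E₀ ⊇ E₁ ⊇ ⋯ ⊇ Eₙ with |E_j| = 2^{-j} t such that for every j = 1,…,n and
every F_σ set A ⊆ E_{j-1} with |A| ≥ 2^{-j} t one has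
mes_{n-1} Π_j(E_j) ≤ mes_{n-1} Π_j(A). -/
theorem stmt7 (n : ℕ) (hn : 1 ≤ n) (E : Set (Fin n → ℝ)) (hE : IsFsigma E)
    (t : ℝ) (ht : 0 < t) (hEt : volume E = ENNReal.ofReal t) :
    ∃ Es : Fin (n + 1) → Set (Fin n → ℝ),
      Es 0 = E ∧
      (∀ j : Fin (n + 1), IsFsigma (Es j)) ∧
      (∀ j : Fin n, Es j.succ ⊆ Es j.castSucc) ∧
      (∀ j : Fin (n + 1), volume (Es j) = ENNReal.ofReal (t / 2 ^ (j : ℕ))) ∧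
      (∀ j : Fin n, ∀ A : Set (Fin n → ℝ), IsFsigma A → A ⊆ Es j.castSucc →
        ENNReal.ofReal (t / 2 ^ ((j : ℕ) + 1)) ≤ volume A →
        volume (projHyp j '' Es j.succ) ≤ volume (projHyp j '' A)) := by
  classical
  have hstep : ∀ k : ℕ, k + 1 ≤ n → 0 < t / 2 ^ (k+1) ∧ t / 2 ^ (k+1) < t / 2 ^ k := by
    intro k hk
    constructor
    · positivity
    · apply div_lt_div_of_pos_left ht (by positivity)
      exact pow_lt_pow_right₀ one_lt_two (lt_add_one k)
  let next : ∀ k : ℕ, Set (Fin n → ℝ) → Set (Fin n → ℝ) := fun k F =>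
    if h : k < n ∧ IsFsigma F ∧ volume F = ENNReal.ofReal (t / 2 ^ k) then
      (stepLemma n ⟨k, h.1⟩ F h.2.1 (t / 2 ^ k) (t / 2 ^ (k+1))
        (hstep k h.1).1 (hstep k h.1).2 h.2.2).choose
    else ∅
  let f : ℕ → Set (Fin n → ℝ) := fun k => Nat.rec E (fun k ih => next k ih) k
  have hf0 : f 0 = E := rfl
  have hfsucc : ∀ k, f (k + 1) = next k (f k) := fun k => rfl
  have inv : ∀ k : ℕ, k ≤ n → IsFsigma (f k) ∧ volume (f k) = ENNReal.ofReal (t / 2 ^ k) := by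
    intro k
    induction k with
    | zero => intro _; exact ⟨hE, by simp only [pow_zero, div_one]; exact hEt⟩
    | succ k ih =>
      intro hk1
      have hk : k < n := Nat.lt_of_succ_le hk1
      obtain ⟨hFs, hFv⟩ := ih hk.le
      have h : k < n ∧ IsFsigma (f k) ∧ volume (f k) = ENNReal.ofReal (t / 2 ^ k) :=
        ⟨hk, hFs, hFv⟩
      have heq : f (k+1) = (stepLemma n ⟨k, h.1⟩ (f k) h.2.1 (t / 2 ^ k) (t / 2 ^ (k+1))
          (hstep k h.1).1 (hstep k h.1).2 h.2.2).choose := by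
        rw [hfsucc k]
        exact dif_pos h
      have hspec := (stepLemma n ⟨k, h.1⟩ (f k) h.2.1 (t / 2 ^ k) (t / 2 ^ (k+1))
          (hstep k h.1).1 (hstep k h.1).2 h.2.2).choose_spec
      rw [← heq] at hspec
      exact ⟨hspec.2.1, hspec.2.2.1⟩
  have spec : ∀ (k : ℕ) (hk : k < n), f (k+1) ⊆ f k ∧
      ∀ A, IsFsigma A → A ⊆ f k → ENNReal.ofReal (t / 2 ^ (k+1)) ≤ volume A →
        volume (projHyp (⟨k, hk⟩ : Fin n) '' f (k+1)) ≤
          volume (projHyp (⟨k, hk⟩ : Fin n) '' A) := by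
    intro k hk
    obtain ⟨hFs, hFv⟩ := inv k hk.le
    have h : k < n ∧ IsFsigma (f k) ∧ volume (f k) = ENNReal.ofReal (t / 2 ^ k) :=
      ⟨hk, hFs, hFv⟩
    have heq : f (k+1) = (stepLemma n ⟨k, h.1⟩ (f k) h.2.1 (t / 2 ^ k) (t / 2 ^ (k+1))
        (hstep k h.1).1 (hstep k h.1).2 h.2.2).choose := by
      rw [hfsucc k]
      exact dif_pos h
    have hspec := (stepLemma n ⟨k, h.1⟩ (f k) h.2.1 (t / 2 ^ k) (t / 2 ^ (k+1))
        (hstep k h.1).1 (hstep k h.1).2 h.2.2).choose_spec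
    rw [← heq] at hspec
    exact ⟨hspec.1, hspec.2.2.2⟩
  refine ⟨fun j => f j, hf0 ▸ rfl, ?_, ?_, ?_, ?_⟩
  · intro j
    exact (inv j (Nat.lt_succ_iff.1 j.isLt)).1
  · intro j
    have := (spec j j.isLt).1
    simpa [Fin.val_succ, Fin.coe_castSucc] using this
  · intro j
    exact (inv j (Nat.lt_succ_iff.1 j.isLt)).2
  · intro j A hAf hAF hAv
    have hj : (j : ℕ) < n := j.isLt
    have h2 := (spec j hj).2 A hAf (by simpa [Fin.coe_castSucc] using hAF)
      (by simpa using hAv)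
    have hje : (⟨(j:ℕ), hj⟩ : Fin n) = j := Fin.eta j hj
    rw [hje] at h2
    simpa [Fin.val_succ] using h2
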